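/- Assume L ⊆ Σ^ω is recognized by some deterministic co-Büchi automaton. For all u,v ∈ Σ* with (u,v) not ≈_L ⊥, there exist u₁,u₂ ∈ Σ* with u₁u₂ ∼_L u such that (u₁,u₂v) is pointed. -/

import Mathlib

open Classical

/-- Rank of a transition in a co-Büchi automaton: `one` or `two`. -/
inductive Rk | one | two
deriving DecidableEq

/-- A co-Büchi automaton over alphabet `A` with state type `Q`:
initial states and a transition relation where each transition carries a rank. -/
structure CoBuchi (A : Type) (Q : Type) where
  init : Set Q
  delta : Set (Q × A × Rk × Q)

namespace CoBuchi

variable {A Q : Type}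

/-- Every state has an outgoing transition on every letter. -/
def Total (M : CoBuchi A Q) : Prop :=
  ∀ q a, ∃ r q', (q, a, r, q') ∈ M.delta

/-- The prefix `α[0..n-1]` of an infinite word. -/
def prefW (α : ℕ → A) (n : ℕ) : List A := (List.range n).map α

/-- The infinite word `a·w`. -/
def consW (a : A) (w : ℕ → A) : ℕ → A := fun n => match n with
  | 0 => a
  | Nat.succ k => w k

/-- `L(M,q)`: infinite words having a run from `q` with only finitely many rank-1
transitions. -/
def LangFrom (M : CoBuchi A Q) (q : Q) : Set (ℕ → A) :=
  { w | ∃ (ρ : ℕ → Q) (r : ℕ → Rk), ρ 0 = q ∧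
        (∀ n, (ρ n, w n, r n, ρ (n + 1)) ∈ M.delta) ∧
        ∃ N, ∀ n, N ≤ n → r n = Rk.two }

/-- `L(M)`: the language of the automaton. -/
def Lang (M : CoBuchi A Q) : Set (ℕ → A) :=
  { w | ∃ q ∈ M.init, w ∈ M.LangFrom q }

/-- `q →₂^w q'`: a finite run from `q` to `q'` on `w` using only rank-2 transitions. -/
def SafeReach (M : CoBuchi A Q) : Q → List A → Q → Prop
  | q, [], q' => q = q'
  | q, a :: w, q' => ∃ p, (q, a, Rk.two, p) ∈ M.delta ∧ SafeReach M p w q'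

/-- A finite run from `q` to `q'` on `w` using transitions of any rank. -/
def Reach (M : CoBuchi A Q) : Q → List A → Q → Prop
  | q, [], q' => q = q'
  | q, a :: w, q' => ∃ r p, (q, a, r, p) ∈ M.delta ∧ Reach M p w q'

/-- Safe language of a state. -/
def Lsf (M : CoBuchi A Q) (q : Q) : Set (List A) := { w | ∃ q', M.SafeReach q w q' }

/-- Semantically-deterministic: every transition respects residuals. -/
def SemDet (M : CoBuchi A Q) : Prop :=
  ∀ p a rk q, (p, a, rk, q) ∈ M.delta →
    M.LangFrom q = { w | consW a w ∈ M.LangFrom p }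

/-- Unsafe-saturated: all residual-respecting rank-1 transitions are present. -/
def UnsafeSat (M : CoBuchi A Q) : Prop :=
  ∀ p a q, M.LangFrom q = { w | consW a w ∈ M.LangFrom p } →
    (p, a, Rk.one, q) ∈ M.delta

/-- Safe-deterministic: at most one rank-2 transition per state and letter. -/
def SafeDet (M : CoBuchi A Q) : Prop :=
  ∀ p a q q', (p, a, Rk.two, q) ∈ M.delta → (p, a, Rk.two, q') ∈ M.delta → q = q'

/-- Normalized: every rank-2 transition can be completed to a rank-2 loop. -/
def Normalized (M : CoBuchi A Q) : Prop :=
  ∀ q a q', (q, a, Rk.two, q') ∈ M.delta → ∃ x, M.SafeReach q' x q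

/-- Deterministic: one initial state, exactly one transition per state and letter. -/
def Deterministic (M : CoBuchi A Q) : Prop :=
  (∃! q, q ∈ M.init) ∧ ∀ p a, ∃! t : Rk × Q, (p, a, t.1, t.2) ∈ M.delta

/-- History-deterministic: a strategy `σ : Σ* → Q` resolving the nondeterminism,
whose run on every `α ∈ L(M)` can be ranked with finitely many rank-1 transitions. -/
def HistoryDet (M : CoBuchi A Q) : Prop :=
  ∃ σ : List A → Q, σ [] ∈ M.init ∧
    (∀ w a, ∃ rk, (σ w, a, rk, σ (w ++ [a])) ∈ M.delta) ∧
    ∀ α ∈ M.Lang, ∃ r : ℕ → Rk,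
      (∀ n, (σ (prefW α n), α n, r n, σ (prefW α (n + 1))) ∈ M.delta) ∧
      ∃ N, ∀ n, N ≤ n → r n = Rk.two

/-- `q` and `q'` are in the same safe SCC (mutually reachable via rank-2 runs). -/
def SameSafeSCC (M : CoBuchi A Q) (q q' : Q) : Prop :=
  (∃ x, M.SafeReach q x q') ∧ (∃ y, M.SafeReach q' y q)

end CoBuchi

section LangDefs

variable {A : Type} [Nonempty A]

/-- The infinite word `u·w`. -/
def appW (u : List A) (w : ℕ → A) : ℕ → A :=
  fun n => if h : n < u.length then u.get ⟨n, h⟩ else w (n - u.length)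

/-- The infinite word `v^ω` (arbitrary if `v = ε`). -/
noncomputable def iterW (v : List A) : ℕ → A :=
  fun n =>
    if h : v = [] then Classical.arbitrary A
    else v.get ⟨n % v.length, Nat.mod_lt _ (List.length_pos_iff.mpr h)⟩

/-- The ultimately periodic word `u v^ω`. -/
noncomputable def upW (u v : List A) : ℕ → A := appW u (iterW v)

/-- The right congruence `u ∼_L v`. -/
def SimL (L : Set (ℕ → A)) (u v : List A) : Prop :=
  ∀ w : ℕ → A, appW u w ∈ L ↔ appW v w ∈ L

/-- `(u,v) ≈_L ⊥`: `v ≠ ε` and `u(vx)^ω ∉ L` for all `x` with `uvx ∼_L u`. -/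
def ApproxBot (L : Set (ℕ → A)) (u v : List A) : Prop :=
  v ≠ [] ∧ ∀ x : List A, SimL L (u ++ v ++ x) u → upW u (v ++ x) ∉ L

/-- The safe language of a pair: `sfl(u,v) = {x | (u,vx) not ≈_L ⊥}`. -/
def Sfl (L : Set (ℕ → A)) (u v : List A) : Set (List A) :=
  { x | ¬ ApproxBot L u (v ++ x) }

/-- `(u,v) ≡_L (u',v')`. -/
def EquivL (L : Set (ℕ → A)) (u v u' v' : List A) : Prop :=
  SimL L (u ++ v) (u' ++ v') ∧ Sfl L u v = Sfl L u' v'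

/-- `(u,v)` is pointed. -/
def IsPointed (L : Set (ℕ → A)) (u v : List A) : Prop :=
  ¬ ApproxBot L u v ∧
    ∀ u₁ u₂ : List A, SimL L (u₁ ++ u₂) u → ¬ ApproxBot L u₁ (u₂ ++ v) →
      Sfl L u v = Sfl L u₁ (u₂ ++ v)

/-- `(u,v) ≈_L (u',v')` (for pairs with nonempty second components). -/
def ApproxL (L : Set (ℕ → A)) (u v u' v' : List A) : Prop :=
  SimL L u u' ∧ SimL L (u ++ v) (u' ++ v') ∧
    ∀ x : List A, SimL L (u ++ v ++ x) u →
      (upW u (v ++ x) ∈ L ↔ upW u' (v' ++ x) ∈ L)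

/-- `L` is recognized by some (total) deterministic co-Büchi automaton. -/
def DCWRecognizable (L : Set (ℕ → A)) : Prop :=
  ∃ (Q : Type) (_ : Fintype Q) (M : CoBuchi A Q), M.Deterministic ∧ M.Lang = L

/-- IsPointed pairs. -/
def PointedPair (L : Set (ℕ → A)) : Type :=
  { p : List A × List A // IsPointed L p.1 p.2 }

/-- `≡_L` as a setoid on all pairs. -/
def equivLSetoid (L : Set (ℕ → A)) : Setoid (List A × List A) where
  r p q := EquivL L p.1 p.2 q.1 q.2
  iseqv := {
    refl := fun p => ⟨fun w => Iff.rfl, rfl⟩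
    symm := fun h => ⟨fun w => (h.1 w).symm, h.2.symm⟩
    trans := fun h g => ⟨fun w => (h.1 w).trans (g.1 w), h.2.trans g.2⟩ }

/-- `≡_L` as a setoid on pointed pairs. -/
def canonSetoid (L : Set (ℕ → A)) : Setoid (PointedPair L) where
  r p q := EquivL L p.1.1 p.1.2 q.1.1 q.1.2
  iseqv := {
    refl := fun p => ⟨fun w => Iff.rfl, rfl⟩
    symm := fun h => ⟨fun w => (h.1 w).symm, h.2.symm⟩
    trans := fun h g => ⟨fun w => (h.1 w).trans (g.1 w), h.2.trans g.2⟩ }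

/-- States of the canonical automaton: `≡_L`-classes of pointed pairs. -/
def CanonState (L : Set (ℕ → A)) : Type := Quotient (canonSetoid L)

/-- The class `⟦u,v⟧` of a pointed pair. -/
def cls (L : Set (ℕ → A)) (u v : List A) (h : IsPointed L u v) : CanonState L :=
  Quotient.mk (canonSetoid L) ⟨(u, v), h⟩

/-- The canonical automaton `A_{≡_L}`. -/
def canonAut (L : Set (ℕ → A)) : CoBuchi A (CanonState L) where
  init := { s | ∃ (u v : List A) (h : IsPointed L u v),
              s = cls L u v h ∧ SimL L (u ++ v) [] }
  delta := { t |
    (∃ (u v : List A) (h : IsPointed L u v) (h' : IsPointed L u (v ++ [t.2.1])),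
        ¬ ApproxBot L u (v ++ [t.2.1]) ∧
        t.1 = cls L u v h ∧ t.2.2.1 = Rk.two ∧
        t.2.2.2 = cls L u (v ++ [t.2.1]) h') ∨
    (∃ (u v u' v' : List A) (h : IsPointed L u v) (h' : IsPointed L u' v'),
        SimL L (u ++ v ++ [t.2.1]) (u' ++ v') ∧
        t.1 = cls L u v h ∧ t.2.2.1 = Rk.one ∧ t.2.2.2 = cls L u' v' h') }

/-- `θ(u,v)`: states of `A_{≡_L}` reachable by reading `u` from an initial state
(any ranks) and then `v` via rank-2 transitions only. -/
def theta (L : Set (ℕ → A)) (u v : List A) : Set (CanonState L) :=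
  { q | ∃ p₀ ∈ (canonAut L).init, ∃ p,
          (canonAut L).Reach p₀ u p ∧ (canonAut L).SafeReach p v q }

/-- `(u,v)` is supported: `θ(u,v) ≠ ∅`. -/
def Supported (L : Set (ℕ → A)) (u v : List A) : Prop := (theta L u v).Nonempty

/-- `(u,v)` is double-supported: two distinct states of `θ(u,v)` in the same safe SCC. -/
def DoubleSupported (L : Set (ℕ → A)) (u v : List A) : Prop :=
  ∃ q ∈ theta L u v, ∃ q' ∈ theta L u v, q ≠ q' ∧ (canonAut L).SameSafeSCC q q'

/-- `(u,v)` is single-supported. -/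
def SingleSupported (L : Set (ℕ → A)) (u v : List A) : Prop :=
  Supported L u v ∧ ¬ DoubleSupported L u v

/-- `w` concatenated with itself `m` times. -/
def repCat (w : List A) : ℕ → List A
  | 0 => []
  | Nat.succ m => w ++ repCat w m

end LangDefs

set_option linter.unusedSectionVars false
namespace Stmt6Aux
variable {A : Type} [Nonempty A]

theorem appW_nil (w : ℕ → A) : appW ([] : List A) w = w := by
  funext n; simp [appW]

theorem appW_append (u v : List A) (w : ℕ → A) :
    appW (u ++ v) w = appW u (appW v w) := by
  funext n
  simp only [appW, List.length_append, List.get_eq_getElem]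
  by_cases h1 : n < u.length
  · rw [dif_pos (by omega), dif_pos h1, List.getElem_append_left h1]
  · rw [dif_neg h1]
    by_cases h2 : n - u.length < v.length
    · rw [dif_pos (by omega), dif_pos h2, List.getElem_append_right (by omega)]
    · rw [dif_neg (by omega), dif_neg h2]
      congr 1; omega

theorem appW_cons (a : A) (u : List A) (w : ℕ → A) :
    appW (a :: u) w = CoBuchi.consW a (appW u w) := by
  funext n
  cases n with
  | zero => simp [appW, CoBuchi.consW]
  | succ k =>
    simp only [appW, CoBuchi.consW, List.length_cons]
    by_cases h : k < u.length
    · rw [dif_pos (by omega), dif_pos h]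
      simp
    · rw [dif_neg (by omega), dif_neg h]
      congr 1
      omega

theorem simL_refl (L : Set (ℕ → A)) (u : List A) : SimL L u u := fun _ => Iff.rfl

theorem simL_symm {L : Set (ℕ → A)} {u v : List A} (h : SimL L u v) : SimL L v u :=
  fun w => (h w).symm

theorem simL_trans {L : Set (ℕ → A)} {u v t : List A} (h : SimL L u v)
    (h' : SimL L v t) : SimL L u t := fun w => (h w).trans (h' w)

theorem simL_append_right {L : Set (ℕ → A)} {u v : List A} (h : SimL L u v)
    (s : List A) : SimL L (u ++ s) (v ++ s) := by
  intro w; rw [appW_append, appW_append]; exact h _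

theorem iterW_get {z : List A} {n : ℕ} (h : n < z.length) :
    iterW z n = z.get ⟨n, h⟩ := by
  have hz : z ≠ [] := by rintro rfl; simp at h
  simp only [iterW, dif_neg hz]
  congr 1
  exact Fin.ext (by simp [Nat.mod_eq_of_lt h])

theorem iterW_rotate (p s : List A) :
    iterW (p ++ s) = appW p (iterW (s ++ p)) := by
  by_cases hps : p ++ s = []
  · have hp : p = [] := by simpa using (List.append_eq_nil_iff.mp hps).1
    have hs : s = [] := by simpa using (List.append_eq_nil_iff.mp hps).2
    subst hp; subst hs; rw [appW_nil]
  · have hN : 0 < p.length + s.length := by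
      rcases List.exists_cons_of_ne_nil hps with ⟨a, t, h⟩
      have := congrArg List.length h; simp at this; omega
    have hsp : s ++ p ≠ [] := by
      intro h
      have h2 : (s ++ p).length = 0 := by rw [h]; rfl
      rw [List.length_append] at h2; omega
    funext n
    simp only [appW, iterW, dif_neg hps, dif_neg hsp, List.length_append,
      List.get_eq_getElem]
    by_cases h1 : n < p.length
    · rw [dif_pos h1]
      have hm : n % (p.length + s.length) = n := Nat.mod_eq_of_lt (by omega)
      simp only [hm]
      exact List.getElem_append_left h1
    · rw [dif_neg h1]
      have gec : ∀ (l : List A) (i j : ℕ) (hij : i = j) (hi : i < l.length),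
          l[i]'hi = l[j]'(hij ▸ hi) := by
        intro l i j hij hi; subst hij; rfl
      set N := p.length + s.length with hNdef
      set k := n - p.length with hk
      have hn : n = k + p.length := by omega
      set m := k % N with hm
      have hmlt : m < N := Nat.mod_lt _ (by omega)
      have key : n % N = (m + p.length) % N := by
        rw [hn, ← Nat.mod_add_mod, ← hm]
      have e2 : k % (s.length + p.length) = m := by rw [hm, hNdef, Nat.add_comm]
      refine Eq.trans ?_ (gec (s ++ p) _ m e2 (by simp; omega)).symm
      by_cases h2 : m < s.length
      · have e1 : n % N = m + p.length := by
          rw [key, Nat.mod_eq_of_lt (by omega)]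
        refine Eq.trans (gec (p ++ s) _ (m + p.length) e1 (by simp; omega)) ?_
        rw [List.getElem_append_right (by omega), List.getElem_append_left h2]
        congr 1; omega
      · have e1 : n % N = m - s.length := by
          have h3 : (m + p.length) % N = m + p.length - N := by
            rw [Nat.mod_eq_sub_mod (by omega), Nat.mod_eq_of_lt (by omega)]
          rw [key]; omega
        refine Eq.trans (gec (p ++ s) _ (m - s.length) e1 (by simp; omega)) ?_
        rw [List.getElem_append_left (show m - s.length < p.length by omega),
          List.getElem_append_right (show s.length ≤ m from by omega)]

theorem sfl_shrink (L : Set (ℕ → A)) (a b c w : List A) (hab : SimL L (a ++ b) c) :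
    Sfl L a (b ++ w) ⊆ Sfl L c w := by
  intro x hx hbot
  obtain ⟨hne, hall⟩ := hbot
  apply hx
  have hbwx : b ++ w ++ x ≠ [] := by
    intro hcon
    apply hne
    simp only [List.append_eq_nil_iff] at hcon ⊢
    tauto
  refine ⟨hbwx, ?_⟩
  intro t hsimt hmemL
  -- hsimt : SimL L (a ++ (b ++ w ++ x) ++ t) a
  -- hmemL : upW a (b ++ w ++ x ++ t) ∈ L
  apply hall (t ++ b)
  · -- SimL L (c ++ (w ++ x) ++ (t ++ b)) c
    have s1 := simL_append_right hsimt b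
    have s2 := simL_append_right (simL_symm hab) (w ++ (x ++ (t ++ b)))
    simp only [List.append_assoc] at s1 s2 ⊢
    exact simL_trans s2 (simL_trans s1 hab)
  · -- upW c (w ++ x ++ (t ++ b)) ∈ L
    simp only [List.append_assoc] at hmemL ⊢
    -- hmemL : upW a (b ++ (w ++ (x ++ t))) ∈ L
    rw [upW, iterW_rotate b (w ++ (x ++ t)), ← appW_append] at hmemL
    have hmem2 := (hab _).mp hmemL
    rw [upW]
    simp only [List.append_assoc] at hmem2
    exact hmem2

section Automaton
variable {Q : Type}

def dstar (st : Q → A → Rk × Q) (q : Q) (l : List A) : Q :=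
  l.foldl (fun p a => (st p a).2) q

def safeRun (st : Q → A → Rk × Q) : Q → List A → Prop
  | _, [] => True
  | q, a :: l => (st q a).1 = Rk.two ∧ safeRun st (st q a).2 l

def crun (st : Q → A → Rk × Q) (q : Q) (w : ℕ → A) : ℕ → Q
  | 0 => q
  | n + 1 => (st (crun st q w n) (w n)).2

def dropW (w : ℕ → A) (m : ℕ) : ℕ → A := fun i => w (m + i)

def AllSafe (st : Q → A → Rk × Q) (q : Q) (w : ℕ → A) : Prop :=
  ∀ n, (st (crun st q w n) (w n)).1 = Rk.two

variable (st : Q → A → Rk × Q)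

theorem dstar_nil (q : Q) : dstar st q [] = q := rfl

theorem dstar_cons (q : Q) (a : A) (l : List A) :
    dstar st q (a :: l) = dstar st (st q a).2 l := rfl

theorem dstar_append (q : Q) (l₁ l₂ : List A) :
    dstar st q (l₁ ++ l₂) = dstar st (dstar st q l₁) l₂ := by
  simp [dstar]

theorem safeRun_nil (q : Q) : safeRun st q [] := trivial

theorem safeRun_cons (q : Q) (a : A) (l : List A) :
    safeRun st q (a :: l) ↔ (st q a).1 = Rk.two ∧ safeRun st (st q a).2 l :=
  Iff.rfl

theorem safeRun_append (l₁ l₂ : List A) (q : Q) :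
    safeRun st q (l₁ ++ l₂) ↔ safeRun st q l₁ ∧ safeRun st (dstar st q l₁) l₂ := by
  induction l₁ generalizing q with
  | nil => simp [safeRun, dstar_nil]
  | cons a l ih =>
    simp only [List.cons_append, safeRun_cons, dstar_cons, ih, and_assoc]

theorem crun_zero (q : Q) (w : ℕ → A) : crun st q w 0 = q := rfl

theorem crun_succ (q : Q) (w : ℕ → A) (n : ℕ) :
    crun st q w (n + 1) = (st (crun st q w n) (w n)).2 := rfl

theorem crun_add (q : Q) (w : ℕ → A) (m n : ℕ) :
    crun st q w (m + n) = crun st (crun st q w m) (dropW w m) n := by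
  induction n with
  | zero => rfl
  | succ n ih =>
    have : m + (n + 1) = (m + n) + 1 := by omega
    rw [this, crun_succ, crun_succ, ih]
    rfl

theorem crun_list : ∀ (l : List A) (q : Q) (w : ℕ → A),
    (∀ i (h : i < l.length), w i = l.get ⟨i, h⟩) →
    crun st q w l.length = dstar st q l := by
  intro l
  induction l with
  | nil => intro q w _; rfl
  | cons a l ih =>
    intro q w hw
    have h1 : crun st q w (a :: l).length = crun st (crun st q w 1) (dropW w 1) l.length := by
      rw [← crun_add]
      congr 1
      simp [List.length_cons]; omega
    rw [h1, dstar_cons]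
    have h0 : crun st q w 1 = (st q a).2 := by
      rw [crun_succ, crun_zero, hw 0 (by simp)]
      rfl
    rw [h0]
    apply ih
    intro i hi
    have := hw (i + 1) (by simp; omega)
    simpa [dropW, Nat.add_comm] using this

theorem safeRun_iff_ranks : ∀ (l : List A) (q : Q) (w : ℕ → A),
    (∀ i (h : i < l.length), w i = l.get ⟨i, h⟩) →
    (safeRun st q l ↔ ∀ i, i < l.length → (st (crun st q w i) (w i)).1 = Rk.two) := by
  intro l
  induction l with
  | nil => intro q w _; simp [safeRun_nil]
  | cons a l ih =>
    intro q w hw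
    have hw0 : w 0 = a := by simpa using hw 0 (by simp)
    have hshift : ∀ j, crun st q w (j + 1) = crun st (st q a).2 (dropW w 1) j := by
      intro j
      have : j + 1 = 1 + j := by omega
      rw [this, crun_add]
      congr 1
      rw [crun_succ, crun_zero, hw0]
    have hwl : ∀ i (h : i < l.length), dropW w 1 i = l.get ⟨i, h⟩ := by
      intro i hi
      have := hw (i + 1) (by simp; omega)
      simpa [dropW, Nat.add_comm] using this
    rw [safeRun_cons, ih (st q a).2 (dropW w 1) hwl]
    constructor
    · rintro ⟨h2, hrest⟩ i hi
      cases i with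
      | zero => rw [crun_zero, hw0]; exact h2
      | succ j =>
        rw [hshift j]
        have : w (j + 1) = dropW w 1 j := by simp [dropW, Nat.add_comm]
        rw [this]
        exact hrest j (by simpa using hi)
    · intro hall
      constructor
      · have := hall 0 (by simp)
        rwa [crun_zero, hw0] at this
      · intro j hj
        have := hall (j + 1) (by simpa using hj)
        rwa [hshift j, show w (j + 1) = dropW w 1 j from by simp [dropW, Nat.add_comm]] at this

theorem dropW_iterW (z : List A) (j : ℕ) :
    dropW (iterW z) (j * z.length) = iterW z := by
  funext i
  by_cases hz : z = []
  · subst hz; simp [dropW, iterW]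
  · simp only [dropW, iterW, dif_neg hz]
    have : (j * z.length + i) % z.length = i % z.length := by
      rw [Nat.mul_comm]; exact Nat.mul_add_mod _ _ _
    congr 1
    exact Fin.ext (by simpa using this)

theorem iterW_get_lt {z : List A} {i : ℕ} (h : i < z.length) :
    iterW z i = z.get ⟨i, h⟩ := iterW_get h

theorem crun_iter_block (z : List A) (q : Q) (j : ℕ) :
    crun st q (iterW z) (j * z.length) = (fun p => dstar st p z)^[j] q := by
  induction j with
  | zero => simp [crun_zero]
  | succ j ih =>
    have : (j + 1) * z.length = j * z.length + z.length := by ring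
    rw [this, crun_add, ih, dropW_iterW, Function.iterate_succ_apply']
    exact crun_list st z _ (iterW z) (fun i hi => iterW_get hi)

theorem crun_iter_shift (z : List A) (q : Q) (j i : ℕ) :
    crun st q (iterW z) (j * z.length + i) =
      crun st ((fun p => dstar st p z)^[j] q) (iterW z) i := by
  rw [crun_add, crun_iter_block, dropW_iterW]

theorem iterW_shift (z : List A) (j i : ℕ) :
    iterW z (j * z.length + i) = iterW z i := by
  have := congrFun (dropW_iterW z j) i
  simpa [dropW] using this

theorem allSafe_iter_iff (z : List A) (hz : z ≠ []) (q : Q) :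
    AllSafe st q (iterW z) ↔
      ∀ j, safeRun st ((fun p => dstar st p z)^[j] q) z := by
  have hzl : 0 < z.length := List.length_pos_iff.mpr hz
  constructor
  · intro hs j
    rw [safeRun_iff_ranks st z _ (iterW z) (fun i hi => iterW_get hi)]
    intro i hi
    have := hs (j * z.length + i)
    rwa [crun_iter_shift, iterW_shift] at this
  · intro hs n
    have hdecomp : n = (n / z.length) * z.length + n % z.length := by
      rw [Nat.div_add_mod' n z.length]
    rw [hdecomp, crun_iter_shift, iterW_shift]
    have := (safeRun_iff_ranks st z _ (iterW z) (fun i hi => iterW_get hi)).mp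
      (hs (n / z.length))
    exact this _ (Nat.mod_lt _ hzl)

end Automaton


section Lang
variable {Q : Type} (M : CoBuchi A Q) (st : Q → A → Rk × Q)
  (hmem : ∀ q a, (q, a, (st q a).1, (st q a).2) ∈ M.delta)
  (huniq : ∀ q a r p, (q, a, r, p) ∈ M.delta → (r, p) = st q a)

theorem crun_consW (q : Q) (a : A) (w : ℕ → A) (n : ℕ) :
    crun st q (CoBuchi.consW a w) (n + 1) = crun st (st q a).2 w n := by
  induction n with
  | zero => rfl
  | succ n ih => rw [crun_succ, ih]; rfl

include hmem huniq

theorem mem_LangFrom_iff (q : Q) (w : ℕ → A) :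
    w ∈ M.LangFrom q ↔
      ∃ N, ∀ n, N ≤ n → (st (crun st q w n) (w n)).1 = Rk.two := by
  constructor
  · rintro ⟨ρ, r, h0, htr, N, hN⟩
    have hr : ∀ n, ρ n = crun st q w n := by
      intro n
      induction n with
      | zero => exact h0
      | succ n ih =>
        have h2 := huniq _ _ _ _ (htr n)
        have : ρ (n + 1) = (st (ρ n) (w n)).2 := by
          rw [← h2]
        rw [this, ih, crun_succ]
    refine ⟨N, fun n hn => ?_⟩
    have h2 := huniq _ _ _ _ (htr n)
    have hrn : r n = (st (crun st q w n) (w n)).1 := by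
      rw [← hr n, ← h2]
    rw [← hrn]
    exact hN n hn
  · rintro ⟨N, hN⟩
    exact ⟨crun st q w, fun n => (st (crun st q w n) (w n)).1, rfl,
      fun n => hmem _ _, N, hN⟩

theorem consW_mem_LangFrom (q : Q) (a : A) (w : ℕ → A) :
    CoBuchi.consW a w ∈ M.LangFrom q ↔ w ∈ M.LangFrom (st q a).2 := by
  rw [mem_LangFrom_iff M st hmem huniq, mem_LangFrom_iff M st hmem huniq]
  constructor
  · rintro ⟨N, hN⟩
    refine ⟨N, fun n hn => ?_⟩
    have := hN (n + 1) (by omega)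
    rwa [crun_consW] at this
  · rintro ⟨N, hN⟩
    refine ⟨N + 1, fun n hn => ?_⟩
    cases n with
    | zero => omega
    | succ m =>
      rw [crun_consW]
      exact hN m (by omega)

theorem appW_mem_LangFrom (l : List A) (q : Q) (w : ℕ → A) :
    appW l w ∈ M.LangFrom q ↔ w ∈ M.LangFrom (dstar st q l) := by
  induction l generalizing q with
  | nil => rw [appW_nil, dstar_nil]
  | cons a l ih =>
    rw [appW_cons, consW_mem_LangFrom M st hmem huniq, dstar_cons]
    exact ih _

theorem iterW_mem_LangFrom (z : List A) (hz : z ≠ []) (q : Q) :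
    iterW z ∈ M.LangFrom q ↔
      ∃ j, ∀ j', safeRun st ((fun p => dstar st p z)^[j' + j] q) z := by
  have hzl : 0 < z.length := List.length_pos_iff.mpr hz
  rw [mem_LangFrom_iff M st hmem huniq]
  constructor
  · rintro ⟨N, hN⟩
    refine ⟨N, fun j' => ?_⟩
    rw [safeRun_iff_ranks st z _ (iterW z) (fun i hi => iterW_get hi)]
    intro i hi
    have h1 : crun st ((fun p => dstar st p z)^[j' + N] q) (iterW z) i
        = crun st q (iterW z) ((j' + N) * z.length + i) := (crun_iter_shift st z q _ i).symm
    rw [h1, ← iterW_shift z (j' + N) i]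
    apply hN
    have : N ≤ (j' + N) * z.length := by
      calc N ≤ j' + N := by omega
        _ = (j' + N) * 1 := by omega
        _ ≤ (j' + N) * z.length := Nat.mul_le_mul_left _ hzl
    omega
  · rintro ⟨j, hj⟩
    refine ⟨j * z.length, fun n hn => ?_⟩
    have hdecomp : n = (n / z.length) * z.length + n % z.length := by
      rw [Nat.div_add_mod' n z.length]
    have hjle : j ≤ n / z.length := by
      by_contra hcon
      have : n / z.length * z.length + n % z.length < j * z.length := by
        have h1 : n / z.length + 1 ≤ j := by omega
        have h2 : (n / z.length + 1) * z.length ≤ j * z.length :=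
          Nat.mul_le_mul_right _ h1
        have h3 : n % z.length < z.length := Nat.mod_lt _ hzl
        nlinarith
      omega
    have := hj (n / z.length - j)
    rw [show n / z.length - j + j = n / z.length from by omega] at this
    rw [safeRun_iff_ranks st z _ (iterW z) (fun i hi => iterW_get hi)] at this
    have h2 := this (n % z.length) (Nat.mod_lt _ hzl)
    rwa [← crun_iter_shift, ← iterW_shift z (n / z.length), ← hdecomp] at h2

theorem iterW_mem_congr (z z' : List A) (hz : z ≠ []) (hz' : z' ≠ [])
    (hd : ∀ p, dstar st p z = dstar st p z')
    (hs : ∀ p, safeRun st p z ↔ safeRun st p z') (q : Q) :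
    iterW z ∈ M.LangFrom q ↔ iterW z' ∈ M.LangFrom q := by
  rw [iterW_mem_LangFrom M st hmem huniq z hz, iterW_mem_LangFrom M st hmem huniq z' hz']
  have hfun : (fun p => dstar st p z) = fun p => dstar st p z' := funext hd
  rw [hfun]
  exact exists_congr fun j => forall_congr' fun j' => hs _

theorem simL_states (L : Set (ℕ → A)) (q0 : Q)
    (hL' : ∀ w, w ∈ L ↔ w ∈ M.LangFrom q0) (c d : List A) :
    SimL L c d ↔
      ∀ α, (α ∈ M.LangFrom (dstar st q0 c) ↔ α ∈ M.LangFrom (dstar st q0 d)) := by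
  have key : ∀ (e : List A) (α : ℕ → A),
      appW e α ∈ L ↔ α ∈ M.LangFrom (dstar st q0 e) := fun e α =>
    (hL' _).trans (appW_mem_LangFrom M st hmem huniq e q0 α)
  exact forall_congr' fun α => iff_congr (key c α) (key d α)

theorem sfl_transfer_sub (L : Set (ℕ → A)) (q0 : Q)
    (hL' : ∀ w, w ∈ L ↔ w ∈ M.LangFrom q0)
    (a a' r r' : List A)
    (hq : dstar st q0 a = dstar st q0 a')
    (hf : ∀ p, dstar st p r = dstar st p r')
    (hs : ∀ p, safeRun st p r ↔ safeRun st p r')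
    (he : r = [] → r' = []) :
    Sfl L a r ⊆ Sfl L a' r' := by
  intro x hx hbot
  obtain ⟨hne', hall'⟩ := hbot
  apply hx
  have hrx : r ++ x ≠ [] := by
    intro hcon
    apply hne'
    simp only [List.append_eq_nil_iff] at hcon ⊢
    exact ⟨he hcon.1, hcon.2⟩
  refine ⟨hrx, ?_⟩
  intro t hsimt hmemL
  -- hsimt : SimL L (a ++ (r ++ x) ++ t) a
  -- hmemL : upW a ((r ++ x) ++ t) ∈ L
  have hrxt : (r ++ x) ++ t ≠ [] := by
    intro hcon; apply hrx; simp only [List.append_eq_nil_iff] at hcon; simp [hcon.1]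
  have hrxt' : (r' ++ x) ++ t ≠ [] := by
    intro hcon; apply hne'; simp only [List.append_eq_nil_iff] at hcon; simp [hcon.1]
  have hst1 : dstar st q0 (a ++ (r ++ x) ++ t) = dstar st q0 (a' ++ (r' ++ x) ++ t) := by
    simp only [dstar_append, hq, hf]
  have hsim' : SimL L (a' ++ (r' ++ x) ++ t) a' := by
    rw [simL_states M st hmem huniq L q0 hL'] at hsimt ⊢
    intro α
    rw [← hst1, ← hq]
    exact hsimt α
  apply hall' t hsim'
  -- goal : upW a' (r' ++ x ++ t) ∈ L
  rw [upW] at hmemL ⊢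
  rw [hL', appW_mem_LangFrom M st hmem huniq] at hmemL ⊢
  rw [← hq]
  have hd : ∀ p, dstar st p (r ++ x ++ t) = dstar st p (r' ++ x ++ t) := by
    intro p
    simp only [dstar_append, hf]
  have hsafe : ∀ p, safeRun st p (r ++ x ++ t) ↔ safeRun st p (r' ++ x ++ t) := by
    intro p
    simp only [safeRun_append, dstar_append, hf, hs]
  exact (iterW_mem_congr M st hmem huniq _ _ hrxt hrxt' hd hsafe _).mp hmemL

theorem sfl_transfer (L : Set (ℕ → A)) (q0 : Q)
    (hL' : ∀ w, w ∈ L ↔ w ∈ M.LangFrom q0)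
    (a a' r r' : List A)
    (hq : dstar st q0 a = dstar st q0 a')
    (hf : ∀ p, dstar st p r = dstar st p r')
    (hs : ∀ p, safeRun st p r ↔ safeRun st p r')
    (he : r = [] ↔ r' = []) :
    Sfl L a r = Sfl L a' r' :=
  Set.Subset.antisymm
    (sfl_transfer_sub M st hmem huniq L q0 hL' a a' r r' hq hf hs he.mp)
    (sfl_transfer_sub M st hmem huniq L q0 hL' a' a r' r hq.symm
      (fun p => (hf p).symm) (fun p => (hs p).symm) he.mpr)


end Lang


end Stmt6Aux

/-- every pair that is not `≈_L ⊥` can be extended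
(to the left of the looping part) to a pointed pair. -/
theorem stmt6 {A : Type} [Nonempty A] [Fintype A] (L : Set (ℕ → A))
    (hrec : DCWRecognizable L)
    (u v : List A) (h : ¬ ApproxBot L u v) :
    ∃ u₁ u₂ : List A, SimL L (u₁ ++ u₂) u ∧ IsPointed L u₁ (u₂ ++ v) := by
  classical
  open Stmt6Aux in
  obtain ⟨Q, hQfin, M, hdet, hL⟩ := hrec
  haveI := hQfin
  haveI : DecidableEq Q := Classical.decEq Q
  obtain ⟨q0, hq0, hq0u⟩ := hdet.1
  have h2 : ∀ (p : Q) (a : A), ∃ t : Rk × Q, (p, a, t.1, t.2) ∈ M.delta ∧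
      ∀ (r : Rk) (q' : Q), (p, a, r, q') ∈ M.delta → (r, q') = t := by
    intro p a
    obtain ⟨t, ht, hu⟩ := hdet.2 p a
    exact ⟨t, ht, fun r q' hrq => hu (r, q') hrq⟩
  choose st hstmem hstuniq using h2
  have huniq : ∀ (q : Q) (a : A) (r : Rk) (p : Q),
      (q, a, r, p) ∈ M.delta → (r, p) = st q a := fun q a r p hm => hstuniq q a r p hm
  have hL' : ∀ w, w ∈ L ↔ w ∈ M.LangFrom q0 := by
    intro w
    rw [← hL]
    constructor
    · rintro ⟨q, hq, hw⟩
      rwa [hq0u q hq] at hw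
    · intro hw
      exact ⟨q0, hq0, hw⟩
  -- the family of decompositions
  set F : Set (List A × List A) :=
    {p | SimL L (p.1 ++ p.2) u ∧ ¬ ApproxBot L p.1 (p.2 ++ v)} with hF
  set ψ : List A × List A → Set (List A) := fun p => Sfl L p.1 (p.2 ++ v) with hψ
  set φ : List A × List A → Q × (Q → Q) × (Q → Bool) × Bool := fun p =>
    (dstar st q0 p.1, fun q => dstar st q (p.2 ++ v),
      fun q => @decide (safeRun st q (p.2 ++ v)) (Classical.propDecidable _),
      @decide (p.2 ++ v = []) (Classical.propDecidable _)) with hφ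
  have hψφ : ∀ p p', φ p = φ p' → ψ p = ψ p' := by
    intro p p' hfe
    simp only [hφ, Prod.mk.injEq] at hfe
    obtain ⟨e1, e2, e3, e4⟩ := hfe
    refine sfl_transfer M st hstmem huniq L q0 hL' p.1 p'.1 (p.2 ++ v) (p'.2 ++ v)
      e1 (fun q => congrFun e2 q) (fun q => ?_) ?_
    · have := congrFun e3 q
      rwa [decide_eq_decide] at this
    · rwa [decide_eq_decide] at e4
  -- finiteness of the set of safe languages of decompositions
  have hVfin : (ψ '' F).Finite := by
    set ξ : Q × (Q → Q) × (Q → Bool) × Bool → Set (List A) := fun t =>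
      if ht : ∃ p, φ p = t then ψ ht.choose else ∅ with hξ
    have hsub : ψ '' F ⊆ Set.range ξ := by
      rintro S ⟨p, _, rfl⟩
      refine ⟨φ p, ?_⟩
      have hex : ∃ p', φ p' = φ p := ⟨p, rfl⟩
      simp only [hξ, dif_pos hex]
      exact hψφ _ _ hex.choose_spec
    exact (Set.finite_range ξ).subset hsub
  have hFmem : ((u, ([] : List A)) : List A × List A) ∈ F := by
    constructor
    · intro w
      rw [List.append_nil]
    · simpa using h
  obtain ⟨S₀, hS₀V, hS₀min⟩ : ∃ S₀ ∈ ψ '' F, ∀ S ∈ ψ '' F, id S ≤ id S₀ → id S₀ = id S := by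
    obtain ⟨i, hi, hmin⟩ :=
      Set.Finite.exists_minimalFor id _ hVfin ⟨ψ (u, []), Set.mem_image_of_mem _ hFmem⟩
    exact ⟨i, hi, fun S hS hle => le_antisymm (hmin hS hle) hle⟩
  obtain ⟨⟨u₁, u₂⟩, hmemF, hψeq⟩ := hS₀V
  refine ⟨u₁, u₂, hmemF.1, hmemF.2, ?_⟩
  intro a b hsim hnb
  -- hsim : SimL L (a ++ b) u₁ ; hnb : ¬ApproxBot L a (b ++ (u₂ ++ v))
  have hmemF' : ((a, b ++ u₂) : List A × List A) ∈ F := by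
    constructor
    · have h1 := simL_append_right hsim u₂
      have h2 := simL_trans h1 hmemF.1
      simp only [List.append_assoc] at h2 ⊢
      exact h2
    · simp only [List.append_assoc]
      exact hnb
  have hsub2 : ψ (a, b ++ u₂) ⊆ ψ (u₁, u₂) := by
    have hshr := sfl_shrink L a b u₁ (u₂ ++ v) hsim
    simp only [hψ]
    intro y hy
    apply hshr
    simp only [List.append_assoc] at hy ⊢
    exact hy
  have hle : id (ψ (a, b ++ u₂)) ≤ id (ψ (u₁, u₂)) := hsub2
  have heq := hS₀min (ψ (a, b ++ u₂)) (Set.mem_image_of_mem _ hmemF')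
    (by rw [hψeq] at hle; exact hle)
  -- heq : id S₀ = id (ψ (a, b ++ u₂))
  have : Sfl L u₁ (u₂ ++ v) = Sfl L a ((b ++ u₂) ++ v) := by
    have h3 : ψ (u₁, u₂) = ψ (a, b ++ u₂) := by
      rw [hψeq]
      exact heq
    simpa only [hψ] using h3
  rw [this]
  simp only [List.append_assoc]
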